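/- Over all d×d density matrices ρ, the von Neumann entropy of S(ρ) = ½(|0⟩⟨0|+|1⟩⟨1|) ⊗ I/d + ½(|0⟩⟨1|+|1⟩⟨0|) ⊗ ρ/d² is minimized exactly when ρ is a pure state. -/

import Mathlib

open Matrix Kronecker BigOperators
open scoped ComplexOrder

/-- The output of the quantum SWITCH of two completely depolarizing channels
with control in `|+⟩`, written system ⊗ control. -/
noncomputable def switchOut (d : ℕ) (ρ : Matrix (Fin d) (Fin d) ℂ) :
    Matrix (Fin d × Fin 2) (Fin d × Fin 2) ℂ :=
  (2 * (d : ℂ))⁻¹ • ((1 : Matrix (Fin d) (Fin d) ℂ) ⊗ₖ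
      (Matrix.single (0 : Fin 2) 0 (1 : ℂ) + Matrix.single (1 : Fin 2) 1 (1 : ℂ)))
    + (2 * (d : ℂ) ^ 2)⁻¹ • (ρ ⊗ₖ
      (Matrix.single (0 : Fin 2) 1 (1 : ℂ) + Matrix.single (1 : Fin 2) 0 (1 : ℂ)))


open Polynomial

lemma charpoly_conj_aux {n : Type*} [Fintype n] [DecidableEq n]
    (P A Q : Matrix n n ℂ) (hPQ : P * Q = 1) (hQP : Q * P = 1) :
    (P * A * Q).charpoly = A.charpoly := by
  have hPQ' : (P.map (C : ℂ →+* ℂ[X])) * (Q.map C) = 1 := by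
    rw [← Matrix.map_mul, hPQ, Matrix.map_one _ (map_zero _) (map_one _)]
  have hQP' : (Q.map (C : ℂ →+* ℂ[X])) * (P.map C) = 1 := by
    rw [← Matrix.map_mul, hQP, Matrix.map_one _ (map_zero _) (map_one _)]
  have key : charmatrix (P * A * Q) = P.map C * charmatrix A * Q.map C := by
    unfold charmatrix
    simp only [RingHom.mapMatrix_apply]
    rw [Matrix.map_mul, Matrix.map_mul]
    rw [mul_sub, sub_mul]
    congr 1
    have : (Matrix.scalar n (X : ℂ[X])) = (X : ℂ[X]) • (1 : Matrix n n ℂ[X]) := by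
      simp [Matrix.scalar, smul_eq_diagonal_mul]
    rw [this, mul_smul_comm, smul_mul_assoc, mul_one, hPQ']
  rw [Matrix.charpoly, Matrix.charpoly, key, det_mul, det_mul, mul_comm, ← mul_assoc,
    ← det_mul, hQP', det_one, one_mul]

lemma charpoly_diag_aux {n : Type*} [Fintype n] [DecidableEq n] (v : n → ℂ) :
    (Matrix.diagonal v).charpoly = ∏ i, (X - C (v i)) := by
  have : charmatrix (Matrix.diagonal v) = Matrix.diagonal (fun i => (X : ℂ[X]) - C (v i)) := by
    ext i j
    by_cases h : i = j
    · subst h; simp [charmatrix_apply_eq]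
    · simp [charmatrix_apply_ne _ _ _ h, Matrix.diagonal_apply_ne _ h]
  rw [Matrix.charpoly, this, det_diagonal]

lemma eig_multiset_aux {n : Type*} [Fintype n] [DecidableEq n]
    {A : Matrix n n ℂ} (hA : A.IsHermitian)
    (P Q : Matrix n n ℂ) (μ : n → ℝ) (hPQ : P * Q = 1) (hQP : Q * P = 1)
    (hdec : A = P * Matrix.diagonal (fun i => ((μ i : ℝ) : ℂ)) * Q) :
    Finset.univ.val.map hA.eigenvalues = Finset.univ.val.map μ := by
  have hV1 : (hA.eigenvectorUnitary : Matrix n n ℂ) *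
      star (hA.eigenvectorUnitary : Matrix n n ℂ) = 1 :=
    Matrix.mem_unitaryGroup_iff.mp (hA.eigenvectorUnitary).2
  have hV2 : star (hA.eigenvectorUnitary : Matrix n n ℂ) *
      (hA.eigenvectorUnitary : Matrix n n ℂ) = 1 :=
    Matrix.mem_unitaryGroup_iff'.mp (hA.eigenvectorUnitary).2
  have hcoe : (RCLike.ofReal ∘ hA.eigenvalues : n → ℂ) =
      fun i => ((hA.eigenvalues i : ℝ) : ℂ) := rfl
  have h1 : A.charpoly = ∏ i, (X - C ((hA.eigenvalues i : ℝ) : ℂ)) := by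
    conv_lhs => rw [hA.spectral_theorem, Unitary.conjStarAlgAut_apply]
    rw [charpoly_conj_aux _ _ _ hV1 hV2, hcoe, charpoly_diag_aux]
  have h2 : A.charpoly = ∏ i, (X - C ((μ i : ℝ) : ℂ)) := by
    conv_lhs => rw [hdec]
    rw [charpoly_conj_aux _ _ _ hPQ hQP, charpoly_diag_aux]
  have key : ∀ w : n → ℝ, (∏ i, (X - C ((w i : ℝ) : ℂ))).roots =
      Finset.univ.val.map (fun i => ((w i : ℝ) : ℂ)) := by
    intro w
    rw [show (∏ i, (X - C ((w i : ℝ) : ℂ))) =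
        ((Finset.univ.val.map (fun i => ((w i : ℝ) : ℂ))).map (fun a => X - C a)).prod from by
      rw [Multiset.map_map]; rfl,
      Polynomial.roots_multiset_prod_X_sub_C]
  have h3 : Finset.univ.val.map (fun i => ((hA.eigenvalues i : ℝ) : ℂ)) =
      Finset.univ.val.map (fun i => ((μ i : ℝ) : ℂ)) := by
    rw [← key, ← key, ← h1, ← h2]
  apply Multiset.map_injective (f := (fun x : ℝ => (x : ℂ))) Complex.ofReal_injective
  rw [Multiset.map_map, Multiset.map_map]
  exact h3

lemma sum_comp_eq_of_multiset_eq {n : Type*} [Fintype n] {ν μ : n → ℝ}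
    (h : Finset.univ.val.map ν = Finset.univ.val.map μ) (g : ℝ → ℝ) :
    ∑ k, g (ν k) = ∑ k, g (μ k) := by
  have key : ∀ w : n → ℝ, ∑ k, g (w k) = ((Finset.univ.val.map w).map g).sum := by
    intro w; rw [Multiset.map_map]; rfl
  rw [key, key, h]

lemma gcomb (a b : ℝ) (hab : 0 < a - b) (hb : 0 < b) {x : ℝ} (h0 : 0 ≤ x) (h1 : x ≤ 1) :
    (a + b * x) * Real.log (a + b * x) + (a - b * x) * Real.log (a - b * x)
      ≤ x * ((a + b) * Real.log (a + b) + (a - b) * Real.log (a - b))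
        + (1 - x) * (2 * (a * Real.log a)) := by
  have ha : (0:ℝ) ≤ a := le_of_lt (lt_of_le_of_lt hab.le (by linarith))
  have m1 : a + b ∈ Set.Ici (0:ℝ) := by simp; linarith
  have m2 : a - b ∈ Set.Ici (0:ℝ) := by simp; linarith
  have m3 : a ∈ Set.Ici (0:ℝ) := by simpa using ha
  have c1 := Real.convexOn_mul_log.2 m1 m3 h0 (show (0:ℝ) ≤ 1 - x by linarith) (show x + (1 - x) = 1 by ring)
  have c2 := Real.convexOn_mul_log.2 m2 m3 h0 (show (0:ℝ) ≤ 1 - x by linarith) (show x + (1 - x) = 1 by ring)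
  simp only [smul_eq_mul] at c1 c2
  have e1 : x * (a + b) + (1 - x) * a = a + b * x := by ring
  have e2 : x * (a - b) + (1 - x) * a = a - b * x := by ring
  rw [e1] at c1
  rw [e2] at c2
  nlinarith [c1, c2]

lemma gcomb_strict (a b : ℝ) (hab : 0 < a - b) (hb : 0 < b) {x : ℝ} (h0 : 0 < x) (h1 : x < 1) :
    (a + b * x) * Real.log (a + b * x) + (a - b * x) * Real.log (a - b * x)
      < x * ((a + b) * Real.log (a + b) + (a - b) * Real.log (a - b))
        + (1 - x) * (2 * (a * Real.log a)) := by
  have ha : (0:ℝ) ≤ a := le_of_lt (lt_of_le_of_lt hab.le (by linarith))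
  have m1 : a + b ∈ Set.Ici (0:ℝ) := by simp; linarith
  have m2 : a - b ∈ Set.Ici (0:ℝ) := by simp; linarith
  have m3 : a ∈ Set.Ici (0:ℝ) := by simpa using ha
  have hne1 : a + b ≠ a := by linarith
  have c1 := Real.strictConvexOn_mul_log.2 m1 m3 hne1 h0 (show (0:ℝ) < 1 - x by linarith) (show x + (1 - x) = 1 by ring)
  have c2 := Real.convexOn_mul_log.2 m2 m3 h0.le (show (0:ℝ) ≤ 1 - x by linarith) (show x + (1 - x) = 1 by ring)
  simp only [smul_eq_mul] at c1 c2
  have e1 : x * (a + b) + (1 - x) * a = a + b * x := by ring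
  have e2 : x * (a - b) + (1 - x) * a = a - b * x := by ring
  rw [e1] at c1
  rw [e2] at c2
  nlinarith [c1, c2]

lemma fin2_id : Matrix.single (0 : Fin 2) (0 : Fin 2) (1 : ℂ) +
    Matrix.single (1 : Fin 2) (1 : Fin 2) (1 : ℂ) = 1 := by
  ext i j
  fin_cases i <;> fin_cases j <;>
    simp [Matrix.single, Matrix.one_apply]

lemma fin2_X : Matrix.single (0 : Fin 2) (1 : Fin 2) (1 : ℂ) +
    Matrix.single (1 : Fin 2) (0 : Fin 2) (1 : ℂ) = !![0,1;1,0] := by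
  ext i j
  fin_cases i <;> fin_cases j <;>
    simp [Matrix.single]

lemma MN_eq_one : !![(1:ℂ),1;1,-1] * ((2:ℂ)⁻¹ • !![(1:ℂ),1;1,-1]) = 1 := by
  ext i j
  fin_cases i <;> fin_cases j <;>
    simp [Matrix.mul_apply, Fin.sum_univ_two, Matrix.one_apply] <;> norm_num

lemma NM_eq_one : ((2:ℂ)⁻¹ • !![(1:ℂ),1;1,-1]) * !![(1:ℂ),1;1,-1] = 1 := by
  ext i j
  fin_cases i <;> fin_cases j <;>
    simp [Matrix.mul_apply, Fin.sum_univ_two, Matrix.one_apply] <;> norm_num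

lemma MZN_eq_X : !![(1:ℂ),1;1,-1] * Matrix.diagonal ![(1:ℂ),-1] *
    ((2:ℂ)⁻¹ • !![(1:ℂ),1;1,-1]) = !![0,1;1,0] := by
  ext i j
  fin_cases i <;> fin_cases j <;>
    simp [Matrix.mul_apply, Fin.sum_univ_two, Matrix.vecMul, dotProduct, Matrix.diagonal_apply, Matrix.vecHead, Matrix.vecTail] <;> norm_num

lemma switchOut_decomp (d : ℕ) (ρ : Matrix (Fin d) (Fin d) ℂ) (hρ : ρ.IsHermitian) :
    switchOut d ρ =
      ((hρ.eigenvectorUnitary : Matrix (Fin d) (Fin d) ℂ) ⊗ₖ !![(1:ℂ),1;1,-1]) *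
        Matrix.diagonal (fun p : Fin d × Fin 2 =>
          ((((2*(d:ℝ))⁻¹ + (2*(d:ℝ)^2)⁻¹ * (hρ.eigenvalues p.1 * ![(1:ℝ),-1] p.2)) : ℝ) : ℂ)) *
      ((star (hρ.eigenvectorUnitary : Matrix (Fin d) (Fin d) ℂ)) ⊗ₖ
        ((2:ℂ)⁻¹ • !![(1:ℂ),1;1,-1])) := by
  set U := (hρ.eigenvectorUnitary : Matrix (Fin d) (Fin d) ℂ) with hUdef
  have hU1 : U * star U = 1 := Matrix.mem_unitaryGroup_iff.mp (hρ.eigenvectorUnitary).2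
  have hsp : ρ = U * Matrix.diagonal (fun i => ((hρ.eigenvalues i : ℝ) : ℂ)) * star U := by
    have h := hρ.spectral_theorem; rw [Unitary.conjStarAlgAut_apply] at h; exact h
  have hdiag : Matrix.diagonal (fun p : Fin d × Fin 2 =>
        ((((2*(d:ℝ))⁻¹ + (2*(d:ℝ)^2)⁻¹ * (hρ.eigenvalues p.1 * ![(1:ℝ),-1] p.2)) : ℝ) : ℂ))
      = (2*(d:ℂ))⁻¹ • (1 : Matrix (Fin d × Fin 2) (Fin d × Fin 2) ℂ)
        + (2*(d:ℂ)^2)⁻¹ • ((Matrix.diagonal (fun i => ((hρ.eigenvalues i : ℝ) : ℂ))) ⊗ₖ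
            Matrix.diagonal ![(1:ℂ),-1]) := by
    rw [Matrix.diagonal_kronecker_diagonal, ← Matrix.diagonal_one, ← Matrix.diagonal_smul,
      ← Matrix.diagonal_smul, Matrix.diagonal_add]
    refine congrArg Matrix.diagonal (funext fun p => ?_)
    rcases p with ⟨i, j⟩
    fin_cases j <;>
      · push_cast
        simp [Matrix.vecHead, Matrix.vecTail]
        try ring
  have hPQ : (U ⊗ₖ !![(1:ℂ),1;1,-1]) * ((star U) ⊗ₖ ((2:ℂ)⁻¹ • !![(1:ℂ),1;1,-1])) = 1 := by
    rw [← Matrix.mul_kronecker_mul, hU1, MN_eq_one, Matrix.one_kronecker_one]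
  have hmid : (U ⊗ₖ !![(1:ℂ),1;1,-1]) *
      ((Matrix.diagonal (fun i => ((hρ.eigenvalues i : ℝ) : ℂ))) ⊗ₖ Matrix.diagonal ![(1:ℂ),-1]) *
      ((star U) ⊗ₖ ((2:ℂ)⁻¹ • !![(1:ℂ),1;1,-1])) = ρ ⊗ₖ !![0,1;1,0] := by
    rw [← Matrix.mul_kronecker_mul, ← Matrix.mul_kronecker_mul, MZN_eq_X, ← hsp]
  rw [hdiag]
  simp only [mul_add, add_mul, mul_smul_comm, smul_mul_assoc, mul_one]
  rw [hPQ, hmid]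
  unfold switchOut
  rw [fin2_id, fin2_X, Matrix.one_kronecker_one]

theorem switchOut_entropy_minimized_at_pure (d : ℕ) (hd : 2 ≤ d) :
    ∀ (ρ : Matrix (Fin d) (Fin d) ℂ), ρ.PosSemidef → ρ.trace = 1 →
    ∀ (hS : (switchOut d ρ).IsHermitian),
    (-(((d : ℝ) + 1) / (2 * (d : ℝ) ^ 2) * Real.log (((d : ℝ) + 1) / (2 * (d : ℝ) ^ 2))
        + ((d : ℝ) - 1) / (2 * (d : ℝ) ^ 2) * Real.log (((d : ℝ) - 1) / (2 * (d : ℝ) ^ 2))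
        + 2 * ((d : ℝ) - 1) * (1 / (2 * (d : ℝ))) * Real.log (1 / (2 * (d : ℝ))))
      ≤ -∑ k : Fin d × Fin 2, hS.eigenvalues k * Real.log (hS.eigenvalues k)) ∧
    ((-∑ k : Fin d × Fin 2, hS.eigenvalues k * Real.log (hS.eigenvalues k)
        = -(((d : ℝ) + 1) / (2 * (d : ℝ) ^ 2) * Real.log (((d : ℝ) + 1) / (2 * (d : ℝ) ^ 2))
          + ((d : ℝ) - 1) / (2 * (d : ℝ) ^ 2) * Real.log (((d : ℝ) - 1) / (2 * (d : ℝ) ^ 2))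
          + 2 * ((d : ℝ) - 1) * (1 / (2 * (d : ℝ))) * Real.log (1 / (2 * (d : ℝ)))))
      ↔ ρ * ρ = ρ) := by
  intro ρ hpsd htr hS
  have hρ : ρ.IsHermitian := hpsd.1
  have hd0 : 0 < d := by omega
  have hdR : (0:ℝ) < d := by exact_mod_cast hd0
  have hd2 : (2:ℝ) ≤ (d:ℝ) := by exact_mod_cast hd
  set U := (hρ.eigenvectorUnitary : Matrix (Fin d) (Fin d) ℂ) with hUdef
  have hU1 : U * star U = 1 := Matrix.mem_unitaryGroup_iff.mp (hρ.eigenvectorUnitary).2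
  have hU2 : star U * U = 1 := Matrix.mem_unitaryGroup_iff'.mp (hρ.eigenvectorUnitary).2
  set lam := hρ.eigenvalues with hlamdef
  set a : ℝ := (2*(d:ℝ))⁻¹ with ha
  set b : ℝ := (2*(d:ℝ)^2)⁻¹ with hb
  have hab : 0 < a - b := by
    rw [ha, hb, sub_pos]
    apply inv_strictAnti₀ (by positivity)
    nlinarith
  have hbpos : 0 < b := by rw [hb]; positivity
  have hPQ : (U ⊗ₖ !![(1:ℂ),1;1,-1]) * ((star U) ⊗ₖ ((2:ℂ)⁻¹ • !![(1:ℂ),1;1,-1])) = 1 := by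
    rw [← Matrix.mul_kronecker_mul, hU1, MN_eq_one, Matrix.one_kronecker_one]
  have hQP : ((star U) ⊗ₖ ((2:ℂ)⁻¹ • !![(1:ℂ),1;1,-1])) * (U ⊗ₖ !![(1:ℂ),1;1,-1]) = 1 := by
    rw [← Matrix.mul_kronecker_mul, hU2, NM_eq_one, Matrix.one_kronecker_one]
  have hms := eig_multiset_aux hS _ _
    (fun p : Fin d × Fin 2 => a + b * (lam p.1 * ![(1:ℝ),-1] p.2)) hPQ hQP
    (switchOut_decomp d ρ hρ)
  have hEnt : ∑ k : Fin d × Fin 2, hS.eigenvalues k * Real.log (hS.eigenvalues k)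
      = ∑ i, ((a + b * lam i) * Real.log (a + b * lam i)
            + (a - b * lam i) * Real.log (a - b * lam i)) := by
    rw [sum_comp_eq_of_multiset_eq hms (fun t => t * Real.log t)]
    rw [Fintype.sum_prod_type]
    refine Finset.sum_congr rfl fun i _ => ?_
    rw [Fin.sum_univ_two]
    have e0 : a + b * (lam i * ![(1:ℝ),-1] 0) = a + b * lam i := by
      simp
    have e1 : a + b * (lam i * ![(1:ℝ),-1] 1) = a - b * lam i := by
      simp [Matrix.vecHead, Matrix.vecTail]
      ring
    rw [e0, e1]
  have hnn : ∀ i, 0 ≤ lam i := fun i => hpsd.eigenvalues_nonneg i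
  have hsum : ∑ i, lam i = 1 := by
    have h1 : ρ.trace = ∑ i, (lam i : ℂ) := by
      conv_lhs => rw [hρ.spectral_theorem, Unitary.conjStarAlgAut_apply]
      rw [Matrix.trace_mul_cycle, ← hUdef, hU2, Matrix.one_mul, Matrix.trace_diagonal]
      rfl
    rw [htr] at h1
    exact_mod_cast h1.symm
  have hle1 : ∀ i, lam i ≤ 1 := fun i =>
    hsum ▸ Finset.single_le_sum (fun j _ => hnn j) (Finset.mem_univ i)
  set K1 := (a + b) * Real.log (a + b) + (a - b) * Real.log (a - b) with hK1
  set K2 := 2 * (a * Real.log a) with hK2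
  have hc1 : ((d:ℝ)+1)/(2*(d:ℝ)^2) = a + b := by rw [ha, hb]; field_simp
  have hc2 : ((d:ℝ)-1)/(2*(d:ℝ)^2) = a - b := by rw [ha, hb]; field_simp
  have hc3 : 1/(2*(d:ℝ)) = a := by rw [ha, one_div]
  have hgoalT : (((d : ℝ) + 1) / (2 * (d : ℝ) ^ 2) * Real.log (((d : ℝ) + 1) / (2 * (d : ℝ) ^ 2))
        + ((d : ℝ) - 1) / (2 * (d : ℝ) ^ 2) * Real.log (((d : ℝ) - 1) / (2 * (d : ℝ) ^ 2))
        + 2 * ((d : ℝ) - 1) * (1 / (2 * (d : ℝ))) * Real.log (1 / (2 * (d : ℝ))))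
      = K1 + ((d:ℝ) - 1) * K2 := by
    rw [hc1, hc2, hc3, hK1, hK2]; ring
  have hsumR : ∑ i, (lam i * K1 + (1 - lam i) * K2) = K1 + ((d:ℝ) - 1) * K2 := by
    rw [Finset.sum_add_distrib, ← Finset.sum_mul, ← Finset.sum_mul, hsum,
      Finset.sum_sub_distrib, hsum, Finset.sum_const, Finset.card_univ, Fintype.card_fin]
    simp
  have hterm : ∀ i, (a + b * lam i) * Real.log (a + b * lam i)
      + (a - b * lam i) * Real.log (a - b * lam i) ≤ lam i * K1 + (1 - lam i) * K2 :=
    fun i => gcomb a b hab hbpos (hnn i) (hle1 i)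
  have hle : ∑ i, ((a + b * lam i) * Real.log (a + b * lam i)
      + (a - b * lam i) * Real.log (a - b * lam i)) ≤ K1 + ((d:ℝ) - 1) * K2 := by
    rw [← hsumR]; exact Finset.sum_le_sum fun i _ => hterm i
  -- spectral characterization of projections
  have hD : star U * ρ * U = Matrix.diagonal (fun i => ((lam i : ℝ) : ℂ)) :=
    by have h := hρ.spectral_theorem; rw [Unitary.conjStarAlgAut_apply, ← hUdef] at h; conv_lhs => rw [h]
       rw [← Matrix.mul_assoc, ← Matrix.mul_assoc, hU2, Matrix.one_mul, Matrix.mul_assoc, hU2, Matrix.mul_one]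
       rfl
  have hsp : ρ = U * Matrix.diagonal (fun i => ((lam i : ℝ) : ℂ)) * star U := by
    have h := hρ.spectral_theorem; rw [Unitary.conjStarAlgAut_apply] at h; exact h
  have cancel1 : ∀ X : Matrix (Fin d) (Fin d) ℂ, U * (star U * X) = X := fun X => by
    rw [← Matrix.mul_assoc, hU1, Matrix.one_mul]
  have cancel2 : ∀ X : Matrix (Fin d) (Fin d) ℂ, star U * (U * X) = X := fun X => by
    rw [← Matrix.mul_assoc, hU2, Matrix.one_mul]
  have hproj_iff : ρ * ρ = ρ ↔ ∀ i, lam i = 0 ∨ lam i = 1 := by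
    constructor
    · intro hmul i
      have h2 : (star U * ρ * U) * (star U * ρ * U) = star U * ρ * U := by
        simp only [Matrix.mul_assoc, cancel1]
        rw [show ρ * (ρ * U) = ρ * ρ * U from (Matrix.mul_assoc _ _ _).symm, hmul]
      rw [hD, Matrix.diagonal_mul_diagonal] at h2
      have h3 := congr_fun (congr_fun h2 i) i
      simp only [Matrix.diagonal_apply_eq] at h3
      have h4 : lam i * lam i = lam i := by exact_mod_cast h3
      have h5 : lam i * (lam i - 1) = 0 := by ring_nf; linarith [h4]
      rcases mul_eq_zero.mp h5 with h | h
      · exact Or.inl h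
      · exact Or.inr (by linarith)
    · intro hΛ
      have hDD : Matrix.diagonal (fun i => ((lam i : ℝ) : ℂ)) *
          Matrix.diagonal (fun i => ((lam i : ℝ) : ℂ)) =
          Matrix.diagonal (fun i => ((lam i : ℝ) : ℂ)) := by
        rw [Matrix.diagonal_mul_diagonal]
        refine congrArg Matrix.diagonal (funext fun i => ?_)
        rcases hΛ i with h | h <;> simp [h]
      conv_lhs => rw [hsp]
      simp only [Matrix.mul_assoc, cancel2]
      rw [show Matrix.diagonal (fun i => ((lam i : ℝ) : ℂ)) *
          (Matrix.diagonal (fun i => ((lam i : ℝ) : ℂ)) * star U)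
          = Matrix.diagonal (fun i => ((lam i : ℝ) : ℂ)) * star U from by
        rw [← Matrix.mul_assoc, hDD]]
      rw [← Matrix.mul_assoc, ← hsp]
  constructor
  · rw [hEnt, hgoalT]
    exact neg_le_neg hle
  · rw [hEnt, hgoalT, hproj_iff, neg_inj]
    constructor
    · intro h
      have htermeq := (Finset.sum_eq_sum_iff_of_le fun i _ => hterm i).mp
        (by rw [hsumR]; exact h)
      intro i
      by_contra hcon
      push_neg at hcon
      have h0 : 0 < lam i := lt_of_le_of_ne (hnn i) (Ne.symm hcon.1)
      have h1 : lam i < 1 := lt_of_le_of_ne (hle1 i) hcon.2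
      have := gcomb_strict a b hab hbpos h0 h1
      have heq := htermeq i (Finset.mem_univ i)
      rw [hK1, hK2] at heq
      linarith [this, heq.le, heq.ge]
    · intro hΛ
      rw [← hsumR]
      refine Finset.sum_congr rfl fun i _ => ?_
      rcases hΛ i with h | h <;> rw [h] <;> rw [hK1, hK2] <;> ring_nf
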